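/- Let H = ∑_l p_l P_l with P_l Hermitian involutions and (p_l) a probability distribution, and let ψ be a unit vector. Then the expected value over independent samples l_1,…,l_r ~ p of ⟨ψ, exp(-iφP_{l_r})⋯exp(-iφP_{l_1}) ψ⟩, with φ = arctan(τ), equals (1+τ²)^{-r/2} ⟨ψ, (I - iτH)^r ψ⟩. -/

import Mathlib

open Matrix Complex

lemma exp_smul_involution {n : ℕ} (A : Matrix (Fin n) (Fin n) ℂ) (hA : A * A = 1) (z : ℂ) :
    NormedSpace.exp (z • A) =
      ((Complex.exp z + Complex.exp (-z)) / 2) • (1 : Matrix (Fin n) (Fin n) ℂ)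
        + ((Complex.exp z - Complex.exp (-z)) / 2) • A := by
  letI : SeminormedRing (Matrix (Fin n) (Fin n) ℂ) := Matrix.linftyOpSemiNormedRing
  letI : NormedRing (Matrix (Fin n) (Fin n) ℂ) := Matrix.linftyOpNormedRing
  letI : NormedAlgebra ℂ (Matrix (Fin n) (Fin n) ℂ) := Matrix.linftyOpNormedAlgebra
  set Q : Matrix (Fin n) (Fin n) ℂ := (2⁻¹ : ℂ) • (1 + A) with hQ
  set R : Matrix (Fin n) (Fin n) ℂ := (2⁻¹ : ℂ) • (1 - A) with hR
  have hQQ : Q * Q = Q := by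
    simp only [hQ, Matrix.smul_mul, Matrix.mul_smul, add_mul, mul_add, one_mul, mul_one, hA]
    module
  have hRR : R * R = R := by
    simp only [hR, Matrix.smul_mul, Matrix.mul_smul, sub_mul, mul_sub, one_mul, mul_one, hA]
    module
  have hQR : Q * R = 0 := by
    simp only [hQ, hR, Matrix.smul_mul, Matrix.mul_smul, add_mul, mul_sub, one_mul, mul_one, hA]
    module
  have hRQ : R * Q = 0 := by
    simp only [hQ, hR, Matrix.smul_mul, Matrix.mul_smul, sub_mul, mul_add, one_mul, mul_one, hA]
    module
  have hQRsum : Q + R = 1 := by rw [hQ, hR]; module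
  let f : (ℂ × ℂ) →ₐ[ℂ] Matrix (Fin n) (Fin n) ℂ :=
    { toFun := fun x => x.1 • Q + x.2 • R
      map_one' := by simpa using hQRsum
      map_mul' := fun x y => by
        simp only [Prod.fst_mul, Prod.snd_mul, add_mul, mul_add, Matrix.smul_mul,
          Matrix.mul_smul, hQQ, hRR, hQR, hRQ, smul_zero, add_zero, zero_add, smul_smul]
        module
      map_zero' := by simp
      map_add' := fun x y => by
        simp only [Prod.fst_add, Prod.snd_add, add_smul]; module
      commutes' := fun c => by
        simp only [Algebra.algebraMap_eq_smul_one, Prod.smul_fst, Prod.smul_snd,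
          Prod.fst_one, Prod.snd_one, smul_eq_mul, mul_one, ← smul_add, hQRsum] }
  have hf : Continuous f := f.toLinearMap.continuous_of_finiteDimensional
  have hzA : z • A = f (z, -z) := by
    show z • A = z • Q + (-z) • R
    rw [hQ, hR]; module
  rw [hzA]; refine Eq.trans (NormedSpace.map_exp f hf (z, -z)).symm ?_
  have : NormedSpace.exp ((z, -z) : ℂ × ℂ) = (Complex.exp z, Complex.exp (-z)) := by
    ext
    · rw [Prod.fst_exp, Complex.exp_eq_exp_ℂ]
    · rw [Prod.snd_exp, Complex.exp_eq_exp_ℂ]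
  rw [this]
  show Complex.exp z • Q + Complex.exp (-z) • R = _
  rw [hQ, hR]; module

lemma exp_arctan_involution {n : ℕ} (A : Matrix (Fin n) (Fin n) ℂ) (hA : A * A = 1) (τ : ℝ) :
    NormedSpace.exp ((-(Complex.I * (Real.arctan τ : ℂ))) • A) =
      ((((Real.sqrt (1 + τ ^ 2))⁻¹ : ℝ) : ℂ)) •
        ((1 : Matrix (Fin n) (Fin n) ℂ) - (Complex.I * (τ : ℂ)) • A) := by
  set t := Real.arctan τ
  rw [exp_smul_involution A hA]
  have e1 : Complex.exp (-(Complex.I * (t : ℂ))) =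
      Complex.cos (t : ℂ) - Complex.sin (t : ℂ) * Complex.I := by
    rw [show -(Complex.I * (t : ℂ)) = (-(t : ℂ)) * Complex.I by ring, Complex.exp_mul_I,
      Complex.cos_neg, Complex.sin_neg]
    ring
  have e2 : Complex.exp (-(-(Complex.I * (t : ℂ)))) =
      Complex.cos (t : ℂ) + Complex.sin (t : ℂ) * Complex.I := by
    rw [show -(-(Complex.I * (t : ℂ))) = (t : ℂ) * Complex.I by ring, Complex.exp_mul_I]
  rw [e1, e2]
  have hc : Complex.cos (t : ℂ) = (((Real.sqrt (1 + τ ^ 2))⁻¹ : ℝ) : ℂ) := by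
    rw [← Complex.ofReal_cos, Real.cos_arctan, one_div]
  have hs : Complex.sin (t : ℂ) = (τ : ℂ) * (((Real.sqrt (1 + τ ^ 2))⁻¹ : ℝ) : ℂ) := by
    rw [← Complex.ofReal_sin, Real.sin_arctan, div_eq_mul_inv]
    push_cast
    ring
  rw [show (Complex.cos ↑t - Complex.sin ↑t * Complex.I - (Complex.cos ↑t + Complex.sin ↑t * Complex.I)) / 2
      = -(Complex.sin ↑t * Complex.I) by ring]
  rw [show (Complex.cos ↑t - Complex.sin ↑t * Complex.I + (Complex.cos ↑t + Complex.sin ↑t * Complex.I)) / 2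
      = Complex.cos ↑t by ring]
  rw [hc, hs, smul_sub, smul_smul]
  rw [show -((τ : ℂ) * (((Real.sqrt (1 + τ ^ 2))⁻¹ : ℝ) : ℂ) * Complex.I)
      = -((((Real.sqrt (1 + τ ^ 2))⁻¹ : ℝ) : ℂ) * (Complex.I * (τ : ℂ))) by ring]
  rw [sub_eq_add_neg, ← neg_smul]

lemma list_smul_prod {n : ℕ} :
    ∀ (r : ℕ) (a : Fin r → ℂ) (M : Fin r → Matrix (Fin n) (Fin n) ℂ),
      (List.ofFn fun i => a i • M i).reverse.prod =
        (∏ i, a i) • (List.ofFn fun i => M i).reverse.prod := by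
  intro r
  induction r with
  | zero => intro a M; simp
  | succ r ih =>
    intro a M
    rw [List.ofFn_succ, List.ofFn_succ (f := M), List.reverse_cons, List.reverse_cons,
      List.prod_append, List.prod_append, List.prod_cons, List.prod_cons, List.prod_nil,
      mul_one, mul_one, ih, Fin.prod_univ_succ, smul_mul_smul_comm]
    rw [mul_comm (a 0)]

lemma sum_fn_list_prod {n L : ℕ} (N : Fin L → Matrix (Fin n) (Fin n) ℂ) :
    ∀ r : ℕ, ∑ l : Fin r → Fin L, (List.ofFn fun i => N (l i)).reverse.prod = (∑ l, N l) ^ r := by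
  intro r
  induction r with
  | zero => simp
  | succ r ih =>
    rw [← (Fin.consEquiv fun _ : Fin (r + 1) => Fin L).sum_comp
      (fun l => (List.ofFn fun i => N (l i)).reverse.prod), Fintype.sum_prod_type]
    have : ∀ (a : Fin L) (g : Fin r → Fin L),
        (List.ofFn fun i => N ((Fin.consEquiv fun _ => Fin L) (a, g) i)).reverse.prod
          = (List.ofFn fun i => N (g i)).reverse.prod * N a := by
      intro a g
      rw [List.ofFn_succ]
      simp only [Fin.consEquiv_apply, Fin.cons_zero, Fin.cons_succ]
      rw [List.reverse_cons, List.prod_append, List.prod_cons, List.prod_nil, mul_one]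
    simp_rw [this, ← Finset.sum_mul, ← Finset.mul_sum]
    rw [ih, pow_succ]


/-- The expectation over i.i.d. samples `l 1, …, l r ~ p` of the Hadamard-test signal
`⟨ψ, exp(-iφ P_{l_r}) ⋯ exp(-iφ P_{l_1}) ψ⟩`, with `φ = arctan τ`, equals
`(1+τ²)^(-r/2) ⟨ψ, (1 - iτH)^r ψ⟩` where `H = ∑ l, p l • P l`. -/
theorem qdrift_hadamard_expectation {n L r : ℕ} (P : Fin L → Matrix (Fin n) (Fin n) ℂ)
    (hHerm : ∀ l, (P l).IsHermitian) (hInv : ∀ l, P l ^ 2 = 1)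
    (p : Fin L → ℝ) (hp : ∀ l, 0 ≤ p l) (hsum : ∑ l, p l = 1)
    (ψ : Fin n → ℂ) (hψ : ∑ i, ‖ψ i‖ ^ 2 = 1) (τ : ℝ) :
    ∑ l : Fin r → Fin L,
      ((∏ i, ((p (l i) : ℝ) : ℂ)) *
        (star ψ ⬝ᵥ
          (((List.ofFn fun i : Fin r =>
              NormedSpace.exp
                ((-(Complex.I * (Real.arctan τ : ℂ))) • P (l i))).reverse.prod) *ᵥ ψ))) =
      ((((1 + τ ^ 2 : ℝ) ^ (-(r : ℝ) / 2) : ℝ)) : ℂ) *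
        (star ψ ⬝ᵥ
          ((((1 : Matrix (Fin n) (Fin n) ℂ)
              - (Complex.I * (τ : ℂ)) • ∑ l, ((p l : ℝ) : ℂ) • P l) ^ r) *ᵥ ψ)) := by
  classical
  set c : ℝ := (Real.sqrt (1 + τ ^ 2))⁻¹ with hc
  set M : Fin L → Matrix (Fin n) (Fin n) ℂ :=
    fun l => (1 : Matrix (Fin n) (Fin n) ℂ) - (Complex.I * (τ : ℂ)) • P l with hM
  have hexp : ∀ l : Fin L,
      NormedSpace.exp ((-(Complex.I * (Real.arctan τ : ℂ))) • P l) = (c : ℂ) • M l := by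
    intro l
    exact exp_arctan_involution (P l) (by rw [← pow_two]; exact hInv l) τ
  have step1 : ∀ l : Fin r → Fin L,
      (List.ofFn fun i : Fin r =>
          NormedSpace.exp ((-(Complex.I * (Real.arctan τ : ℂ))) • P (l i))).reverse.prod
        = (c : ℂ) ^ r • (List.ofFn fun i => M (l i)).reverse.prod := by
    intro l
    simp_rw [hexp]
    rw [list_smul_prod r (fun _ => (c : ℂ)) (fun i => M (l i))]
    simp
  simp_rw [step1, Matrix.smul_mulVec, dotProduct_smul, smul_eq_mul]
  have rearrange : ∀ l : Fin r → Fin L,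
      (∏ i, ((p (l i) : ℝ) : ℂ)) *
          ((c : ℂ) ^ r * (star ψ ⬝ᵥ ((List.ofFn fun i => M (l i)).reverse.prod *ᵥ ψ)))
        = (c : ℂ) ^ r *
          (star ψ ⬝ᵥ (((List.ofFn fun i => ((p (l i) : ℝ) : ℂ) • M (l i)).reverse.prod) *ᵥ ψ)) := by
    intro l
    rw [list_smul_prod r (fun i => ((p (l i) : ℝ) : ℂ)) (fun i => M (l i)),
      Matrix.smul_mulVec, dotProduct_smul, smul_eq_mul]
    ring
  simp_rw [rearrange, ← Finset.mul_sum]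
  let Φ : Matrix (Fin n) (Fin n) ℂ →ₗ[ℂ] ℂ :=
    { toFun := fun A => star ψ ⬝ᵥ (A *ᵥ ψ)
      map_add' := fun A B => by
        rw [Matrix.add_mulVec, dotProduct_add]
      map_smul' := fun a A => by
        rw [Matrix.smul_mulVec, dotProduct_smul, RingHom.id_apply] }
  have hΦ : ∀ A, star ψ ⬝ᵥ (A *ᵥ ψ) = Φ A := fun A => rfl
  simp_rw [hΦ, ← map_sum]
  rw [sum_fn_list_prod (fun l => ((p l : ℝ) : ℂ) • M l) r]
  have hsumN : ∑ l, ((p l : ℝ) : ℂ) • M l =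
      (1 : Matrix (Fin n) (Fin n) ℂ) - (Complex.I * (τ : ℂ)) • ∑ l, ((p l : ℝ) : ℂ) • P l := by
    have hsumC : ∑ l, ((p l : ℝ) : ℂ) = 1 := by
      have := congrArg (fun x : ℝ => (x : ℂ)) hsum
      push_cast at this
      simpa using this
    simp_rw [hM, smul_sub, Finset.sum_sub_distrib, ← Finset.sum_smul, hsumC, one_smul,
      Finset.smul_sum]
    congr 1
    exact Finset.sum_congr rfl fun l _ => smul_comm _ _ _
  rw [hsumN]
  have hcoef : ((c : ℂ)) ^ r = ((((1 + τ ^ 2 : ℝ) ^ (-(r : ℝ) / 2) : ℝ)) : ℂ) := by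
    have h0 : (0 : ℝ) ≤ 1 + τ ^ 2 := by positivity
    have : c ^ r = (1 + τ ^ 2 : ℝ) ^ (-(r : ℝ) / 2) := by
      rw [hc, Real.sqrt_eq_rpow, ← Real.rpow_neg_one, ← Real.rpow_natCast _ r,
        ← Real.rpow_mul h0, ← Real.rpow_mul h0]
      congr 1
      push_cast
      ring
    rw [← this]
    push_cast
    ring
  rw [hcoef]
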